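/- Let T ∈ B(X) and S ∈ B(Y) be compact operators on Banach spaces that are equivalent after extension. Then there exist bounded operators G ∈ B(Y, X), H ∈ B(X, Y) and a finite rank operator R ∈ B(X) such that T = G S H + R. -/

import Mathlib

open ContinuousLinearMap Metric

section RieszTheory

variable {Z : Type*} [NormedAddCommGroup Z] [NormedSpace ℂ Z] [CompleteSpace Z]

/-- From a compact operator, extract convergent subsequences of images of norm-bounded
sequences. -/
lemma IsCompactOperator.exists_tendsto_subseq {K : Z →L[ℂ] Z} (hK : IsCompactOperator ⇑K)
    (x : ℕ → Z) (hx : ∀ n, ‖x n‖ ≤ 1) :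
    ∃ (w : Z) (φ : ℕ → ℕ), StrictMono φ ∧
      Filter.Tendsto (fun n => K (x (φ n))) Filter.atTop (nhds w) := by
  obtain ⟨C, hC, hCmem⟩ := hK
  obtain ⟨r, hr, hball⟩ := Metric.mem_nhds_iff.mp hCmem
  set a : ℂ := ((r / 2 : ℝ) : ℂ) with ha
  have hra : (0:ℝ) < r / 2 := by positivity
  have hna : ‖a‖ = r / 2 := by
    rw [ha, Complex.norm_real, Real.norm_of_nonneg (le_of_lt hra)]
  have ha0 : a ≠ 0 := by
    intro h
    rw [h, norm_zero] at hna
    linarith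
  have hmem : ∀ n, K (a • x n) ∈ C := by
    intro n
    apply hball
    rw [mem_ball_zero_iff, norm_smul, hna]
    calc r / 2 * ‖x n‖ ≤ r / 2 * 1 := by
          exact mul_le_mul_of_nonneg_left (hx n) (le_of_lt hra)
      _ < r := by linarith
  obtain ⟨w₀, -, φ, hφ, hconv⟩ := hC.tendsto_subseq hmem
  refine ⟨a⁻¹ • w₀, φ, hφ, ?_⟩
  have heq : (fun n => K (x (φ n))) = fun n => a⁻¹ • ((fun m => K (a • x m)) ∘ φ) n := by
    funext n
    simp only [Function.comp_apply]
    rw [← map_smul, smul_smul, inv_mul_cancel₀ ha0, one_smul]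
  rw [heq]
  exact hconv.const_smul a⁻¹

/-- **Riesz theory**: `1 - K` with `K` compact admits a left regularizer modulo
finite rank operators. -/
lemma exists_left_regularizer_of_compact (K : Z →L[ℂ] Z) (hK : IsCompactOperator ⇑K) :
    ∃ W P : Z →L[ℂ] Z, FiniteDimensional ℂ (LinearMap.range (P : Z →ₗ[ℂ] Z)) ∧
      W ∘L (ContinuousLinearMap.id ℂ Z - K) = ContinuousLinearMap.id ℂ Z - P := by
  set A : Z →L[ℂ] Z := ContinuousLinearMap.id ℂ Z - K with hA
  have hAx : ∀ z, A z = z - K z := fun z => rfl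
  set N : Submodule ℂ Z := LinearMap.ker (A : Z →ₗ[ℂ] Z) with hNdef
  have hNmem : ∀ z, z ∈ N ↔ z = K z := by
    intro z
    rw [hNdef, LinearMap.mem_ker, ContinuousLinearMap.coe_coe, hAx, sub_eq_zero]
  have hNclosed : IsClosed (N : Set Z) := isClosed_ker A
  -- Step 1 : the kernel of `A` is finite dimensional
  haveI hNfin : FiniteDimensional ℂ N := by
    obtain ⟨C, hC, hCmem⟩ := hK
    obtain ⟨r, hr, hball⟩ := Metric.mem_nhds_iff.mp hCmem
    set s : Set Z := (N : Set Z) ∩ closedBall (0 : Z) (r / 2) with hs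
    have hsC : s ⊆ C := by
      rintro z ⟨hz1, hz2⟩
      have hz3 : z ∈ ball (0 : Z) r := by
        rw [mem_ball_zero_iff]
        have := mem_closedBall_zero_iff.mp hz2
        linarith
      have := hball hz3
      rwa [Set.mem_preimage, ← (hNmem z).mp hz1] at this
    have hscpt : IsCompact s :=
      hC.of_isClosed_subset (hNclosed.inter isClosed_closedBall) hsC
    apply FiniteDimensional.of_isCompact_closedBall₀ ℂ (show (0:ℝ) < r/2 by positivity)
    rw [Subtype.isCompact_iff]
    convert hscpt using 1
    ext z
    constructor
    · rintro ⟨⟨y, hy⟩, hyball, rfl⟩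
      exact ⟨hy, by rwa [mem_closedBall_zero_iff] at hyball ⊢⟩
    · rintro ⟨hz1, hz2⟩
      refine ⟨⟨z, hz1⟩, ?_, rfl⟩
      rwa [mem_closedBall_zero_iff] at hz2 ⊢
  -- Step 2 : a continuous projection onto the kernel
  obtain ⟨f, hf⟩ := Submodule.ClosedComplemented.of_finiteDimensional N
  set π : Z →L[ℂ] Z := N.subtypeL ∘L f with hπdef
  have hπmem : ∀ z, π z ∈ N := fun z => (f z).2
  have hπid : ∀ z ∈ N, π z = z := by
    intro z hz
    have h1 := hf ⟨z, hz⟩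
    show (N.subtypeL (f z) : Z) = z
    rw [show f z = f ((⟨z, hz⟩ : N) : Z) from rfl, h1]
    rfl
  set X₀ : Submodule ℂ Z := LinearMap.ker (π : Z →ₗ[ℂ] Z) with hX₀def
  have hX₀closed : IsClosed (X₀ : Set Z) := isClosed_ker π
  have hsub : ∀ z, z - π z ∈ X₀ := by
    intro z
    rw [hX₀def, LinearMap.mem_ker, ContinuousLinearMap.coe_coe, map_sub, hπid _ (hπmem z), sub_self]
  have htriv : ∀ z, z ∈ N → z ∈ X₀ → z = 0 := by
    intro z hzN hzX
    have h1 := hπid z hzN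
    rw [hX₀def, LinearMap.mem_ker, ContinuousLinearMap.coe_coe] at hzX
    rw [hzX] at h1
    exact h1.symm
  have hAπ : ∀ z, A (z - π z) = A z := by
    intro z
    rw [map_sub, show A (π z) = 0 from LinearMap.mem_ker.mp (hπmem z), sub_zero]
  -- Step 3 : `A` is bounded below on `X₀`
  obtain ⟨c, hc, hcb⟩ : ∃ c > 0, ∀ z ∈ X₀, c * ‖z‖ ≤ ‖A z‖ := by
    by_contra h
    push_neg at h
    have key : ∀ n : ℕ, ∃ y : Z, y ∈ X₀ ∧ ‖y‖ = 1 ∧ ‖A y‖ < 1 / (n + 1) := by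
      intro n
      obtain ⟨z, hzX, hzlt⟩ := h (1 / ((n : ℝ) + 1)) (by positivity)
      have hz0 : z ≠ 0 := by
        rintro rfl
        simp at hzlt
      refine ⟨‖z‖⁻¹ • z, X₀.smul_mem _ hzX, ?_, ?_⟩
      · rw [norm_smul, norm_inv, norm_norm, inv_mul_cancel₀ (norm_ne_zero_iff.mpr hz0)]
      · rw [A.map_smul_of_tower, norm_smul, norm_inv, norm_norm,
          inv_mul_lt_iff₀ (norm_pos_iff.mpr hz0), mul_comm]
        exact hzlt
    choose y hyX hynorm hyA using key
    obtain ⟨w, φ, hφ, hconv⟩ := hK.exists_tendsto_subseq y (fun n => le_of_eq (hynorm n))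
    have hA0 : Filter.Tendsto (fun n => A (y (φ n))) Filter.atTop (nhds 0) := by
      rw [tendsto_iff_norm_sub_tendsto_zero]
      simp only [sub_zero]
      apply squeeze_zero (fun n => norm_nonneg _) (fun n => le_of_lt (hyA (φ n)))
      exact tendsto_one_div_add_atTop_nhds_zero_nat.comp hφ.tendsto_atTop
    have hyconv : Filter.Tendsto (fun n => y (φ n)) Filter.atTop (nhds w) := by
      have heq : (fun n => y (φ n)) = fun n => A (y (φ n)) + K (y (φ n)) := by
        funext n
        rw [hAx]
        abel
      rw [heq]
      simpa using hA0.add hconv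
    have hwX : w ∈ X₀ := hX₀closed.mem_of_tendsto hyconv
      (Filter.Eventually.of_forall fun n => hyX (φ n))
    have hwN : w ∈ N := by
      rw [hNdef, LinearMap.mem_ker]
      exact tendsto_nhds_unique ((A.continuous.tendsto w).comp hyconv) hA0
    have hw0 : w = 0 := htriv w hwN hwX
    have hn1 : Filter.Tendsto (fun n => ‖y (φ n)‖) Filter.atTop (nhds ‖w‖) :=
      (continuous_norm.tendsto w).comp hyconv
    rw [hw0, norm_zero] at hn1
    have h10 : (1 : ℝ) = 0 := by
      apply tendsto_nhds_unique _ hn1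
      have heq : (fun n : ℕ => ‖y (φ n)‖) = fun _ : ℕ => (1:ℝ) := funext fun n => hynorm (φ n)
      rw [heq]
      exact tendsto_const_nhds
    norm_num at h10
  -- Step 4 : the range of `A` is closed
  set M : Submodule ℂ Z := LinearMap.range (A : Z →ₗ[ℂ] Z) with hMdef
  have hMim : (M : Set Z) = ⇑A '' (X₀ : Set Z) := by
    apply Set.Subset.antisymm
    · rintro _ ⟨z, rfl⟩
      exact ⟨z - π z, hsub z, hAπ z⟩
    · rintro _ ⟨z, _, rfl⟩
      exact ⟨z, rfl⟩
  have hMclosed : IsClosed (M : Set Z) := by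
    rw [hMim]
    apply IsSeqClosed.isClosed
    intro u p hu hup
    choose xs hxsX hxsA using hu
    have hcauchy : CauchySeq xs := by
      rw [Metric.cauchySeq_iff]
      intro ε hε
      have hucauchy := hup.cauchySeq
      rw [Metric.cauchySeq_iff] at hucauchy
      obtain ⟨Nb, hNb⟩ := hucauchy (c * ε) (by positivity)
      refine ⟨Nb, fun m hm n hn => ?_⟩
      have hd : c * dist (xs m) (xs n) ≤ dist (u m) (u n) := by
        rw [dist_eq_norm, dist_eq_norm, ← hxsA m, ← hxsA n, ← map_sub]
        exact hcb _ (X₀.sub_mem (hxsX m) (hxsX n))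
      have := hNb m hm n hn
      nlinarith [dist_nonneg (x := xs m) (y := xs n)]
    obtain ⟨x, hx⟩ := cauchySeq_tendsto_of_complete hcauchy
    have hxX : x ∈ X₀ := hX₀closed.mem_of_tendsto hx (Filter.Eventually.of_forall hxsX)
    refine ⟨x, hxX, ?_⟩
    have h1 : Filter.Tendsto u Filter.atTop (nhds (A x)) := by
      have h2 := (A.continuous.tendsto x).comp hx
      have heq : u = fun n => A (xs n) := funext fun n => (hxsA n).symm
      rw [heq]
      exact h2
    exact tendsto_nhds_unique h1 hup
  haveI : IsClosed (M : Set Z) := hMclosed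
  -- Step 5 : the quotient by the range is finite dimensional
  set q : Z →L[ℂ] (Z ⧸ M) :=
    LinearMap.mkContinuous M.mkQ 1
      (fun z => by simpa using Submodule.Quotient.norm_mk_le M z) with hqdef
  have hqA : ∀ z, q (A z) = 0 := by
    intro z
    have hmem : A z ∈ M := ⟨z, rfl⟩
    simpa [hqdef] using (Submodule.Quotient.mk_eq_zero M).mpr hmem
  have hqK : ⇑q = ⇑q ∘ ⇑K := by
    funext z
    have h1 : q z - q (K z) = q (A z) := by rw [← map_sub]; rfl
    rw [hqA z] at h1
    simpa [sub_eq_zero] using h1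
  have hqcpt : IsCompactOperator ⇑q := by
    rw [hqK]
    exact hK.clm_comp q
  haveI hQfin : FiniteDimensional ℂ (Z ⧸ M) := by
    obtain ⟨C, hC, hCmem⟩ := hqcpt
    obtain ⟨r, hr, hball⟩ := Metric.mem_nhds_iff.mp hCmem
    apply FiniteDimensional.of_isCompact_closedBall₀ ℂ (show (0:ℝ) < r/4 by positivity)
    apply hC.of_isClosed_subset isClosed_closedBall
    intro v hv
    rw [mem_closedBall_zero_iff] at hv
    obtain ⟨m, rfl, hm⟩ := Submodule.Quotient.norm_mk_lt v (show (0:ℝ) < r/4 by positivity)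
    have hmball : m ∈ ball (0 : Z) r := by
      rw [mem_ball_zero_iff]
      calc ‖m‖ < ‖(Submodule.Quotient.mk m : Z ⧸ M)‖ + r/4 := hm
        _ ≤ r/4 + r/4 := by linarith
        _ < r := by linarith
    have hin := hball hmball
    rw [Set.mem_preimage] at hin
    exact hin
  -- Step 6 : a continuous projection onto the range
  obtain ⟨g, hg⟩ := Submodule.ClosedComplemented.of_quotient_finiteDimensional hMclosed
  -- Step 7 : `A` restricted to `X₀` is an isomorphism onto `M`
  haveI : CompleteSpace X₀ := hX₀closed.completeSpace_coe
  haveI : CompleteSpace M := hMclosed.completeSpace_coe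
  set A₀ : X₀ →L[ℂ] M :=
    ContinuousLinearMap.codRestrict (A ∘L X₀.subtypeL) M (fun z => ⟨z, rfl⟩) with hA₀def
  have hA₀app : ∀ z : X₀, (A₀ z : Z) = A (z : Z) := fun z => rfl
  have hA₀inj : LinearMap.ker (A₀ : X₀ →ₗ[ℂ] M) = ⊥ := by
    rw [LinearMap.ker_eq_bot']
    intro z hz
    have h1 : A (z : Z) = 0 := by
      have h2 := congrArg (Subtype.val) hz
      rw [ContinuousLinearMap.coe_coe, hA₀app] at h2
      simpa using h2
    exact Subtype.ext (htriv _ (LinearMap.mem_ker.mpr h1) z.2)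
  have hA₀surj : LinearMap.range (A₀ : X₀ →ₗ[ℂ] M) = ⊤ := by
    rw [LinearMap.range_eq_top]
    rintro ⟨_, z, rfl⟩
    exact ⟨⟨z - π z, hsub z⟩, Subtype.ext (hAπ z)⟩
  set e := ContinuousLinearEquiv.ofBijective A₀ hA₀inj hA₀surj with hedef
  -- Step 8 : assemble the regularizer
  refine ⟨X₀.subtypeL ∘L (e.symm : M →L[ℂ] X₀) ∘L g, π, ?_, ?_⟩
  · apply Submodule.finiteDimensional_of_le (S₂ := N)
    rintro _ ⟨z, rfl⟩
    exact hπmem z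
  · ext z
    simp only [comp_apply, coe_sub', Pi.sub_apply, coe_id', id_eq, Submodule.subtypeL_apply]
    have h1 : A z ∈ M := ⟨z, rfl⟩
    have h2 : g (A z) = ⟨A z, h1⟩ := hg ⟨A z, h1⟩
    rw [h2]
    have h3 : e ⟨z - π z, hsub z⟩ = ⟨A z, h1⟩ := by
      apply Subtype.ext
      exact (hAπ z)
    rw [← h3]
    simp

end RieszTheory

/-- Compact operators that are equivalent after extension satisfy a finite
rank perturbed conjugation relationship `T = G S H + R`. -/
theorem exists_finite_rank_perturbed_conjugation
    (X Y : Type*) [NormedAddCommGroup X] [NormedSpace ℂ X] [CompleteSpace X]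
    [NormedAddCommGroup Y] [NormedSpace ℂ Y] [CompleteSpace Y]
    (T : X →L[ℂ] X) (S : Y →L[ℂ] Y)
    (hT : IsCompactOperator T) (hS : IsCompactOperator S)
    (hEAE : ∃ (E : (Y × X) ≃L[ℂ] (X × Y)) (F : (X × Y) ≃L[ℂ] (Y × X)),
      T.prodMap (ContinuousLinearMap.id ℂ Y) =
        (E : (Y × X) →L[ℂ] (X × Y)) ∘L
          (S.prodMap (ContinuousLinearMap.id ℂ X)) ∘L
            (F : (X × Y) →L[ℂ] (Y × X))) :
    ∃ (G : Y →L[ℂ] X) (H : X →L[ℂ] Y) (R : X →L[ℂ] X),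
      FiniteDimensional ℂ (LinearMap.range (R : X →ₗ[ℂ] X)) ∧ T = G ∘L S ∘L H + R := by
  obtain ⟨E, F, hEF⟩ := hEAE
  -- the pointwise version of the equivalence after extension
  have key : ∀ v : X × Y, (T v.1, v.2) = E (S (F v).1, (F v).2) := by
    intro v
    have h := DFunLike.congr_fun hEF v
    simpa [Prod.map] using h
  -- block components
  set E11 : Y →L[ℂ] X := (fst ℂ X Y) ∘L (E : (Y × X) →L[ℂ] (X × Y)) ∘L (inl ℂ Y X) with hE11
  set E12 : X →L[ℂ] X := (fst ℂ X Y) ∘L (E : (Y × X) →L[ℂ] (X × Y)) ∘L (inr ℂ Y X) with hE12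
  set E21 : Y →L[ℂ] Y := (snd ℂ X Y) ∘L (E : (Y × X) →L[ℂ] (X × Y)) ∘L (inl ℂ Y X) with hE21
  set E22 : X →L[ℂ] Y := (snd ℂ X Y) ∘L (E : (Y × X) →L[ℂ] (X × Y)) ∘L (inr ℂ Y X) with hE22
  set F11 : X →L[ℂ] Y := (fst ℂ Y X) ∘L (F : (X × Y) →L[ℂ] (Y × X)) ∘L (inl ℂ X Y) with hF11
  set F21 : X →L[ℂ] X := (snd ℂ Y X) ∘L (F : (X × Y) →L[ℂ] (Y × X)) ∘L (inl ℂ X Y) with hF21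
  set G12 : X →L[ℂ] X :=
    (fst ℂ X Y) ∘L (F.symm : (Y × X) →L[ℂ] (X × Y)) ∘L (inr ℂ Y X) with hG12
  set D21 : X →L[ℂ] X :=
    (snd ℂ Y X) ∘L (E.symm : (X × Y) →L[ℂ] (Y × X)) ∘L (inl ℂ X Y) with hD21
  set D22 : Y →L[ℂ] X :=
    (snd ℂ Y X) ∘L (E.symm : (X × Y) →L[ℂ] (Y × X)) ∘L (inr ℂ X Y) with hD22
  have hEsplit : ∀ (u : Y) (v : X), E (u, v) = (E11 u + E12 v, E21 u + E22 v) := by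
    intro u v
    have hsum : ((u, v) : Y × X) = ((u, 0) : Y × X) + ((0, v) : Y × X) := by simp
    rw [hsum, map_add]
    simp [hE11, hE12, hE21, hE22, Prod.ext_iff]
  have hEsymmsplit : ∀ (u : X) (v : Y), (E.symm (u, v)).2 = D21 u + D22 v := by
    intro u v
    have hsum : ((u, v) : X × Y) = ((u, 0) : X × Y) + ((0, v) : X × Y) := by simp
    rw [hsum, map_add]
    simp [hD21, hD22]
  -- relation (1) : T = E11 S F11 + E12 F21
  have r1 : ∀ x : X, T x = E11 (S (F11 x)) + E12 (F21 x) := by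
    intro x
    have h := key (x, 0)
    rw [hEsplit] at h
    have h2 := congrArg Prod.fst h
    simpa [hF11, hF21] using h2
  -- relation (3) : E21 S F11 + E22 F21 = 0
  have r3 : ∀ x : X, E21 (S (F11 x)) + E22 (F21 x) = 0 := by
    intro x
    have h := key (x, 0)
    rw [hEsplit] at h
    have h2 := congrArg Prod.snd h
    simpa [hF11, hF21] using h2.symm
  -- relation : E12 = T ∘ G12
  have hTG : ∀ x : X, E12 x = T (G12 x) := by
    intro x
    have h := key (F.symm ((0 : Y), x))
    rw [F.apply_symm_apply] at h
    have h2 := congrArg Prod.fst h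
    simp only [map_zero] at h2
    exact h2.symm
  -- relation : D21 ∘ E12 + D22 ∘ E22 = id
  have hDE : ∀ x : X, D21 (E12 x) + D22 (E22 x) = x := by
    intro x
    have h : E.symm (E ((0 : Y), x)) = ((0 : Y), x) := E.symm_apply_apply _
    rw [hEsplit] at h
    simp only [zero_add, map_zero] at h
    have h2 := hEsymmsplit (E12 x) (E22 x)
    rw [h] at h2
    exact h2.symm
  -- the compact operator to regularize
  set K : X →L[ℂ] X := D21 ∘L (T ∘L G12) with hKdef
  have hKcpt : IsCompactOperator ⇑K := by
    have h1 : IsCompactOperator (⇑T ∘ ⇑G12) := hT.comp_clm G12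
    have h2 : IsCompactOperator (⇑D21 ∘ (⇑T ∘ ⇑G12)) := h1.clm_comp D21
    have heq : ⇑K = ⇑D21 ∘ (⇑T ∘ ⇑G12) := by
      funext z
      simp [hKdef]
    rwa [heq]
  have hKval : ∀ x, (ContinuousLinearMap.id ℂ X - K) x = D22 (E22 x) := by
    intro x
    have h1 : K x = D21 (E12 x) := by
      simp only [hKdef, comp_apply]
      rw [hTG]
    simp only [coe_sub', Pi.sub_apply, coe_id', id_eq, h1]
    rw [sub_eq_iff_eq_add, add_comm]
    exact (hDE x).symm
  obtain ⟨W, P, hPfin, hWP⟩ := exists_left_regularizer_of_compact K hKcpt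
  have hWB : ∀ x, W (D22 (E22 x)) = x - P x := by
    intro x
    have h := DFunLike.congr_fun hWP x
    rw [comp_apply, hKval x] at h
    simpa using h
  refine ⟨E11 - (E12 ∘L W ∘L D22) ∘L E21, F11, E12 ∘L (P ∘L F21), ?_, ?_⟩
  · haveI := hPfin
    apply Submodule.finiteDimensional_of_le
      (S₂ := (LinearMap.range (P : X →ₗ[ℂ] X)).map (E12 : X →ₗ[ℂ] X))
    rintro _ ⟨x, rfl⟩
    rw [Submodule.mem_map]
    exact ⟨P (F21 x), ⟨F21 x, rfl⟩, rfl⟩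
  · ext x
    simp only [add_apply, comp_apply, coe_sub', Pi.sub_apply]
    have hr3 : E21 (S (F11 x)) = -(E22 (F21 x)) := by
      rw [eq_neg_iff_add_eq_zero]
      exact r3 x
    rw [r1 x, hr3, map_neg, map_neg, map_neg, hWB (F21 x), map_sub]
    abel
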